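/- For natural numbers k ≤ ñ, the fraction of k × ñ matrices over 𝔽₂ whose rank is strictly less than k, i.e. the number of such matrices divided by 2^{kñ}, equals ε_d(k, ñ) := 1 − ∏_{i=0}^{k−1} (1 − 2^{i−ñ}) as a real number. Equivalently, a uniformly random k × ñ matrix over 𝔽₂ fails to have full row rank with probability exactly 1 − ∏_{i=0}^{k−1} (1 − 2^{i−ñ}). -/

import Mathlib

open Matrix

lemma rank_eq_iff_linearIndependent {k n : ℕ} (G : Matrix (Fin k) (Fin n) (ZMod 2)) :
    G.rank = k ↔ LinearIndependent (ZMod 2) G := by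
  constructor
  · intro hr
    refine linearIndependent_iff_card_eq_finrank_span.mpr ?_
    rw [Set.finrank, show Set.range G = Set.range G.row from rfl,
      ← G.rank_eq_finrank_span_row, hr, Fintype.card_fin]
  · intro hli
    simpa using hli.rank_matrix

lemma card_full_rank (k n : ℕ) (h : k ≤ n) :
    Nat.card {G : Matrix (Fin k) (Fin n) (ZMod 2) // G.rank = k} =
      ∏ i ∈ Finset.range k, (2 ^ n - 2 ^ i) := by
  have e : {G : Matrix (Fin k) (Fin n) (ZMod 2) // G.rank = k} ≃
      {s : Fin k → (Fin n → ZMod 2) // LinearIndependent (ZMod 2) s} :=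
    Equiv.subtypeEquiv (Matrix.of.symm) (fun G => rank_eq_iff_linearIndependent G)
  rw [Nat.card_congr e, card_linearIndependent (by simpa using h)]
  simp [Fin.prod_univ_eq_prod_range (fun i => 2 ^ n - 2 ^ i), ZMod.card]

lemma prod_le (k n : ℕ) : ∏ i ∈ Finset.range k, (2 ^ n - 2 ^ i) ≤ 2 ^ (k * n) := by
  calc ∏ i ∈ Finset.range k, (2 ^ n - 2 ^ i) ≤ ∏ i ∈ Finset.range k, 2 ^ n :=
        Finset.prod_le_prod (fun _ _ => Nat.zero_le _) (fun _ _ => Nat.sub_le _ _)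
    _ = 2 ^ (k * n) := by rw [Finset.prod_const, Finset.card_range, ← pow_mul, mul_comm]

lemma card_deficient (k n : ℕ) (h : k ≤ n) :
    Nat.card {G : Matrix (Fin k) (Fin n) (ZMod 2) // G.rank < k} =
      2 ^ (k * n) - ∏ i ∈ Finset.range k, (2 ^ n - 2 ^ i) := by
  classical
  have hlt : ∀ G : Matrix (Fin k) (Fin n) (ZMod 2), G.rank < k ↔ ¬ (G.rank = k) := by
    intro G
    constructor
    · exact fun hlt => hlt.ne
    · intro hne
      exact lt_of_le_of_ne (by simpa using G.rank_le_height) hne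
  have e : {G : Matrix (Fin k) (Fin n) (ZMod 2) // G.rank < k} ≃
      {G : Matrix (Fin k) (Fin n) (ZMod 2) // ¬ (G.rank = k)} :=
    Equiv.subtypeEquiv (Equiv.refl _) (fun G => hlt G)
  rw [Nat.card_congr e, Nat.card_eq_fintype_card, Fintype.card_subtype_compl,
    ← Nat.card_eq_fintype_card, ← Nat.card_eq_fintype_card, card_full_rank k n h]
  congr 1
  rw [Nat.card_eq_fintype_card]
  have : Fintype.card (Matrix (Fin k) (Fin n) (ZMod 2)) =
      Fintype.card (Fin k → Fin n → ZMod 2) := rfl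
  simp only [this, Fintype.card_fun, ZMod.card, Fintype.card_fin]
  rw [← pow_mul, mul_comm]

/-- A uniformly random `k × ñ` matrix over `𝔽₂` (with `k ≤ ñ`) fails to have full row
rank `k` with probability exactly `ε_d(k, ñ) = 1 - ∏_{i=0}^{k-1} (1 - 2^{i-ñ})`:
the number of rank-deficient matrices divided by `2^{kñ}` equals this quantity. -/
theorem rank_deficient_fraction (k ntilde : ℕ) (h : k ≤ ntilde) :
    (Nat.card {G : Matrix (Fin k) (Fin ntilde) (ZMod 2) // G.rank < k} : ℝ) / 2 ^ (k * ntilde)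
      = 1 - ∏ i ∈ Finset.range k, (1 - (2 : ℝ) ^ ((i : ℤ) - (ntilde : ℤ))) := by
  rw [card_deficient k ntilde h, Nat.cast_sub (prod_le k ntilde)]
  have h2 : (2 : ℝ) ^ (k * ntilde) ≠ 0 := by positivity
  rw [sub_div]
  congr 1
  · push_cast
    exact div_self h2
  · push_cast
    rw [show ((2:ℝ) ^ (k * ntilde)) = ∏ _i ∈ Finset.range k, (2:ℝ) ^ ntilde by
      rw [Finset.prod_const, Finset.card_range, ← pow_mul, mul_comm]]
    rw [← Finset.prod_div_distrib]
    refine Finset.prod_congr rfl fun i hi => ?_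
    have hn : (2:ℝ) ^ ntilde ≠ 0 := by positivity
    rw [Nat.cast_sub (Nat.pow_le_pow_right (by norm_num)
      ((Finset.mem_range.mp hi).le.trans h))]
    push_cast
    rw [sub_div, div_self hn, zpow_sub₀ (by norm_num : (2:ℝ) ≠ 0),
      zpow_natCast, zpow_natCast]
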